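/- Let f : ℝ^d → ℝ be differentiable and strictly convex, let S ⊆ ℝ^d, and let (x^m)_{m≥1} be a sequence in S such that for every m, x^{m+1} ∈ S and ⟨∇f(x^m), x^{m+1}⟩ ≥ ⟨∇f(x^m), z⟩ for all z ∈ S. Let F = { x ∈ S : ⟨∇f(x), z − x⟩ ≤ 0 for all z ∈ S } be the set of fixed points, and let f* = sup_{z∈S} f(z). Suppose f(x^1) > f(x) for every x ∈ F with f(x) < f*. If there exists m with f(x^{m+1}) = f(x^m), then f(x^m) = f*. -/

import Mathlib

open RealInnerProductSpace Filter Topology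

variable {d : ℕ}

lemma tangent_le {f : EuclideanSpace ℝ (Fin d) → ℝ} (hdiff : Differentiable ℝ f)
    (hconv : ConvexOn ℝ Set.univ f) (x y : EuclideanSpace ℝ (Fin d)) :
    f x + ⟪gradient f x, y - x⟫ ≤ f y := by
  set g : ℝ → ℝ := fun t => f (x + t • (y - x)) with hg
  have hline : HasDerivAt (fun t : ℝ => x + t • (y - x)) (y - x) 0 := by
    simpa using ((hasDerivAt_id (0:ℝ)).smul_const (y - x)).const_add x
  have hgrad : HasGradientAt f (gradient f x) x := (hdiff x).hasGradientAt
  have hfd : HasFDerivAt f (InnerProductSpace.toDual ℝ _ (gradient f x)) x := hgrad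
  have hgd : HasDerivAt g (⟪gradient f x, y - x⟫) 0 := by
    have := (show HasFDerivAt f _ (x + (0:ℝ) • (y-x)) by simpa using hfd).comp_hasDerivAt 0 hline
    simpa [g, Function.comp_def, InnerProductSpace.toDual_apply_apply] using this
  have hslope : Tendsto (slope g 0) (𝓝[>] 0) (𝓝 (⟪gradient f x, y - x⟫)) :=
    (hasDerivAt_iff_tendsto_slope.mp hgd).mono_left
      (nhdsWithin_mono _ (by intro t ht; exact ne_of_gt ht))
  have hub : ∀ᶠ t in 𝓝[>] (0:ℝ), slope g 0 t ≤ f y - f x := by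
    filter_upwards [Ioo_mem_nhdsGT (by norm_num : (0:ℝ) < 1)] with t ht
    have hconvt := hconv.2 (Set.mem_univ y) (Set.mem_univ x) (le_of_lt ht.1)
      (by linarith [ht.2]) (by ring : t + (1 - t) = 1)
    have : g t ≤ t * f y + (1 - t) * f x := by
      have : x + t • (y - x) = t • y + (1 - t) • x := by
        module
      rw [hg]; simp only [this]; simpa [smul_eq_mul] using hconvt
    have h0 : g 0 = f x := by simp [g]
    rw [slope_def_field, h0, sub_zero, div_le_iff₀ ht.1]
    linarith
  have := le_of_tendsto hslope hub
  linarith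

lemma tangent_lt {f : EuclideanSpace ℝ (Fin d) → ℝ} (hdiff : Differentiable ℝ f)
    (hconv : StrictConvexOn ℝ Set.univ f) {x y : EuclideanSpace ℝ (Fin d)} (hne : x ≠ y) :
    f x + ⟪gradient f x, y - x⟫ < f y := by
  have hmid := tangent_le hdiff hconv.convexOn x (midpoint ℝ x y)
  have hstrict := hconv.2 (Set.mem_univ x) (Set.mem_univ y) hne
    (by norm_num : (0:ℝ) < 1/2) (by norm_num : (0:ℝ) < 1/2) (by norm_num)
  have hmid_eq : midpoint ℝ x y = (1/2 : ℝ) • x + (1/2 : ℝ) • y := by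
    rw [midpoint_eq_smul_add, smul_add]; norm_num
  rw [← hmid_eq] at hstrict
  have hinner : ⟪gradient f x, midpoint ℝ x y - x⟫ = (1/2 : ℝ) * ⟪gradient f x, y - x⟫ := by
    rw [show midpoint ℝ x y - x = (1/2 : ℝ) • (y - x) by rw [hmid_eq]; module,
      inner_smul_right]
  rw [hinner] at hmid
  simp only [smul_eq_mul] at hstrict
  linarith


/-- finite-termination case of the second claim of Theorem 1:
for the SCALE-type iteration in which `x (m+1)` maximizes `z ↦ ⟪∇f(x m), z⟫` over `S`,
if the initialization `x 1` has objective value above that of every non-globally-optimal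
fixed point, and the iteration stalls at some step `m ≥ 1`, then it has reached the
supremum `f*` of `f` over `S`. -/
theorem stalled_iterate_is_global_max (d : ℕ)
    (f : EuclideanSpace ℝ (Fin d) → ℝ)
    (hdiff : Differentiable ℝ f) (hconv : StrictConvexOn ℝ Set.univ f)
    (S : Set (EuclideanSpace ℝ (Fin d)))
    (x : ℕ → EuclideanSpace ℝ (Fin d))
    (hx : ∀ m, 1 ≤ m → x m ∈ S)
    (hiter : ∀ m, 1 ≤ m → ∀ z ∈ S, ⟪gradient f (x m), z⟫ ≤ ⟪gradient f (x m), x (m + 1)⟫)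
    (F : Set (EuclideanSpace ℝ (Fin d)))
    (hF : F = {p | p ∈ S ∧ ∀ z ∈ S, ⟪gradient f p, z - p⟫ ≤ 0})
    (fstar : ℝ) (hfstar : IsLUB (f '' S) fstar)
    (hinit : ∀ p ∈ F, f p < fstar → f p < f (x 1))
    (m : ℕ) (hm : 1 ≤ m) (hstall : f (x (m + 1)) = f (x m)) :
    f (x m) = fstar := by
  -- inner product gain is nonneg at each step
  have hgain : ∀ n, 1 ≤ n → 0 ≤ ⟪gradient f (x n), x (n+1) - x n⟫ := by
    intro n hn
    rw [inner_sub_right, sub_nonneg]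
    exact hiter n hn _ (hx n hn)
  -- monotonicity
  have hmono : ∀ n, 1 ≤ n → f (x n) ≤ f (x (n+1)) := by
    intro n hn
    have := tangent_le hdiff hconv.convexOn (x n) (x (n+1))
    linarith [hgain n hn]
  have hchain : ∀ n, 1 ≤ n → f (x 1) ≤ f (x n) := by
    intro n hn
    induction n with
    | zero => omega
    | succ k ih =>
      rcases Nat.lt_or_ge 1 (k+1) with hk | hk
      · exact (ih (by omega)).trans (hmono k (by omega))
      · have : k = 0 := by omega
        subst this; rfl
  -- stall implies fixed point
  have heq : x (m+1) = x m := by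
    by_contra hne
    have := tangent_lt hdiff hconv (fun h => hne h.symm)
    linarith [hgain m hm]
  have hfix : x m ∈ F := by
    rw [hF]
    refine ⟨hx m hm, fun z hz => ?_⟩
    rw [inner_sub_right, sub_nonpos]
    calc ⟪gradient f (x m), z⟫ ≤ ⟪gradient f (x m), x (m+1)⟫ := hiter m hm z hz
      _ = ⟪gradient f (x m), x m⟫ := by rw [heq]
  have hle : f (x m) ≤ fstar := hfstar.1 ⟨x m, hx m hm, rfl⟩
  rcases lt_or_eq_of_le hle with hlt | h
  · exact absurd (hchain m hm) (not_le.mpr (hinit _ hfix hlt))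
  · exact h
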